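/- Let $\mu$ be a nonnegative finite Borel measure on $\mathbb{R}^N$ with $\mu(\mathbb{R}^N) > 0$, satisfying: for every $a \in \mathbb{R}^N$ there exists $r_a > 0$ such that $\mu$ is invariant under inversion through the sphere of radius $r_a$ centered at $a$. Then $\mu(\Omega) > 0$ for every nonempty open set $\Omega \subset \mathbb{R}^N$. -/

import Mathlib

open MeasureTheory Set

noncomputable def sphereInv {N : ℕ} (a : EuclideanSpace ℝ (Fin N)) (r : ℝ)
    (x : EuclideanSpace ℝ (Fin N)) : EuclideanSpace ℝ (Fin N) :=
  (r ^ 2 / ‖x - a‖ ^ 2) • (x - a) + a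

lemma norm_sphereInv_sub {N : ℕ} (a : EuclideanSpace ℝ (Fin N)) (r : ℝ) (hr : 0 < r)
    (x : EuclideanSpace ℝ (Fin N)) (hx : x ≠ a) :
    ‖sphereInv a r x - a‖ = r ^ 2 / ‖x - a‖ := by
  have hxa : ‖x - a‖ ≠ 0 := by
    simpa [sub_eq_zero] using hx
  have hxa' : (0:ℝ) < ‖x - a‖ := lt_of_le_of_ne (norm_nonneg _) (Ne.symm hxa)
  simp only [sphereInv, add_sub_cancel_right, norm_smul, Real.norm_eq_abs]
  rw [abs_of_nonneg (by positivity)]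
  field_simp

lemma sphereInv_ne {N : ℕ} (a : EuclideanSpace ℝ (Fin N)) (r : ℝ) (hr : 0 < r)
    (x : EuclideanSpace ℝ (Fin N)) (hx : x ≠ a) : sphereInv a r x ≠ a := by
  intro hcon
  have := norm_sphereInv_sub a r hr x hx
  rw [hcon] at this
  have hxa : ‖x - a‖ ≠ 0 := by simpa [sub_eq_zero] using hx
  have hxa' : (0:ℝ) < ‖x - a‖ := lt_of_le_of_ne (norm_nonneg _) (Ne.symm hxa)
  simp only [sub_self, norm_zero] at this
  have hp : (0:ℝ) < r ^ 2 / ‖x - a‖ := by positivity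
  rw [this] at hp
  exact lt_irrefl _ hp

theorem inversion_invariant_positive_on_open (N : ℕ) (hN : 1 ≤ N)
    (μ : Measure (EuclideanSpace ℝ (Fin N))) [IsFiniteMeasure μ]
    (hpos : 0 < μ Set.univ)
    (h : ∀ a : EuclideanSpace ℝ (Fin N), ∃ r > (0:ℝ),
      ∀ A : Set (EuclideanSpace ℝ (Fin N)), MeasurableSet A →
        μ (sphereInv a r ⁻¹' A \ {a}) = μ A) :
    ∀ Ω : Set (EuclideanSpace ℝ (Fin N)), IsOpen Ω → Ω.Nonempty → 0 < μ Ω := by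
  intro Ω hΩ hne
  by_contra h0
  push_neg at h0
  have hΩ0 : μ Ω = 0 := le_antisymm h0 (zero_le)
  obtain ⟨b, hb⟩ := hne
  obtain ⟨ρ, hρ, hball⟩ := Metric.isOpen_iff.mp hΩ b hb
  have hball0 : μ (Metric.ball b ρ) = 0 := measure_mono_null hball hΩ0
  obtain ⟨r, hr, hinv⟩ := h b
  set R : ℝ := r ^ 2 / ρ with hRdef
  have hR : 0 < R := by positivity
  set F : Set (EuclideanSpace ℝ (Fin N)) := {x | R < ‖x - b‖} with hFdef
  have hFmeas : MeasurableSet F := by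
    apply measurableSet_lt measurable_const
    exact (continuous_id.sub continuous_const).norm.measurable
  -- F is null
  have hF0 : μ F = 0 := by
    refine le_antisymm ?_ (zero_le)
    have hsub : F ⊆ sphereInv b r ⁻¹' (Metric.ball b ρ) \ {b} := by
      intro x hx
      have hx' : R < ‖x - b‖ := hx
      have hxb : x ≠ b := by
        intro hc; rw [hc] at hx'; simp at hx'; linarith
      constructor
      · show sphereInv b r x ∈ Metric.ball b ρ
        rw [Metric.mem_ball, dist_eq_norm, norm_sphereInv_sub b r hr x hxb]
        rw [div_lt_iff₀ (lt_trans hR hx')]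
        have : R * ρ = r ^ 2 := by
          rw [hRdef]; field_simp
        nlinarith
      · simpa using hxb
    calc μ F ≤ μ (sphereInv b r ⁻¹' (Metric.ball b ρ) \ {b}) := measure_mono hsub
      _ = μ (Metric.ball b ρ) := hinv _ measurableSet_ball
      _ = 0 := hball0
    
  -- every point has a null neighborhood
  have hloc : ∀ x : EuclideanSpace ℝ (Fin N), ∃ u ∈ nhds x, μ u = 0 := by
    intro c
    obtain ⟨s, hs, hinvs⟩ := h c
    set ε : ℝ := s ^ 2 / (R + ‖c - b‖ + 1) with hεdef
    have hden : (0:ℝ) < R + ‖c - b‖ + 1 := by positivity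
    have hε : 0 < ε := by positivity
    refine ⟨Metric.ball c ε, Metric.ball_mem_nhds c hε, ?_⟩
    have hc0 : μ {c} = 0 := by
      have := hinvs {c} (measurableSet_singleton c)
      rw [← this]
      convert measure_empty (μ := μ)
      ext x
      simp only [mem_diff, mem_preimage, mem_singleton_iff, mem_empty_iff_false, iff_false,
        not_and, not_not]
      intro hx
      by_contra hxc
      exact sphereInv_ne c s hs x hxc hx
    have hFc : μ (sphereInv c s ⁻¹' F \ {c}) = 0 := by rw [hinvs F hFmeas]; exact hF0
    have hsub : Metric.ball c ε ⊆ (sphereInv c s ⁻¹' F \ {c}) ∪ {c} := by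
      intro x hx
      rcases eq_or_ne x c with hxc | hxc
      · exact Or.inr (by simp [hxc])
      · left
        refine ⟨?_, by simpa using hxc⟩
        show sphereInv c s x ∈ F
        show R < ‖sphereInv c s x - b‖
        have hnorm : ‖sphereInv c s x - c‖ = s ^ 2 / ‖x - c‖ :=
          norm_sphereInv_sub c s hs x hxc
        have hxc0 : (0:ℝ) < ‖x - c‖ := by
          simpa [norm_pos_iff, sub_eq_zero] using hxc
        have hxε : ‖x - c‖ < ε := by
          rw [Metric.mem_ball, dist_eq_norm] at hx; exact hx
        have hbig : R + ‖c - b‖ + 1 < s ^ 2 / ‖x - c‖ := by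
          rw [lt_div_iff₀ hxc0]
          have : ε * (R + ‖c - b‖ + 1) = s ^ 2 := by
            rw [hεdef]; field_simp
          nlinarith
        have htri : ‖sphereInv c s x - c‖ ≤ ‖sphereInv c s x - b‖ + ‖b - c‖ := by
          simpa [dist_eq_norm] using dist_triangle (sphereInv c s x) b c
        have hrev : ‖b - c‖ = ‖c - b‖ := norm_sub_rev b c
        rw [hnorm] at htri
        linarith
    refine le_antisymm ?_ (zero_le)
    calc μ (Metric.ball c ε) ≤ μ ((sphereInv c s ⁻¹' F \ {c}) ∪ {c}) := measure_mono hsub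
      _ ≤ μ (sphereInv c s ⁻¹' F \ {c}) + μ {c} := measure_union_le _ _
      _ = 0 := by rw [hFc, hc0, add_zero]
    
  -- conclude μ univ = 0
  have : μ Set.univ = 0 := by
    apply measure_null_of_locally_null
    intro x _
    obtain ⟨u, hu, hu0⟩ := hloc x
    exact ⟨u, by simpa using hu, hu0⟩
  rw [this] at hpos
  exact lt_irrefl _ hpos
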